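/- Let d ≥ 2 and m ≥ 2. Suppose p_1, …, p_m, p* ∈ ℝ^d satisfy p* ≠ p_j and g*_j = (p_j − p*)/‖p_j − p*‖ for all j, with the bearings g*_1, …, g*_m pairwise non-parallel. If x ∈ ℝ^d satisfies x ≠ p_j for all j and Σ_{j=1}^{m} P_{(p_j − x)/‖p_j − x‖} g*_j = 0, then x = p*. That is, p* is the unique equilibrium of the follower dynamics in the 1-to-many system. -/

import Mathlib

open RealInnerProductSpace

/-- `bproj g v` is the orthogonal projection of `v` onto the orthogonal
complement of `g`, i.e. `P_g v = v - (⟪g,v⟫/‖g‖²) • g`. -/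
noncomputable def bproj {d : ℕ} (g v : EuclideanSpace ℝ (Fin d)) :
    EuclideanSpace ℝ (Fin d) :=
  v - ((⟪g, v⟫ : ℝ) / ‖g‖ ^ 2) • g

lemma bproj_inner_g {d : ℕ} (g v : EuclideanSpace ℝ (Fin d)) (hg : g ≠ 0) :
    (⟪bproj g v, g⟫ : ℝ) = 0 := by
  have h : ‖g‖ ^ 2 ≠ 0 := pow_ne_zero _ (norm_ne_zero_iff.mpr hg)
  simp only [bproj, inner_sub_left, real_inner_smul_left, real_inner_self_eq_norm_sq]
  rw [real_inner_comm]
  field_simp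
  ring

lemma bproj_inner_self {d : ℕ} (g v : EuclideanSpace ℝ (Fin d)) (hg : g ≠ 0) :
    (⟪bproj g v, v⟫ : ℝ) = ‖bproj g v‖ ^ 2 := by
  have h : (⟪bproj g v, g⟫ : ℝ) = 0 := bproj_inner_g g v hg
  have : (⟪bproj g v, v⟫ : ℝ) = ⟪bproj g v, bproj g v⟫ := by
    simp only [bproj, inner_sub_right, real_inner_smul_right]
    rw [show (⟪v - (⟪g, v⟫ / ‖g‖ ^ 2) • g, g⟫ : ℝ) = 0 from h]
    ring
  rw [this, real_inner_self_eq_norm_sq]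

/-- Uniqueness of the equilibrium of the follower dynamics in the 1-to-many
system: if the target bearings `g*_j = (p_j − p*)/‖p_j − p*‖` are pairwise
non-parallel and `x` (distinct from all leaders) satisfies
`Σ_j P_{(p_j − x)/‖p_j − x‖} g*_j = 0`, then `x = p*`. -/
theorem stmt7 (d m : ℕ) (hd : 2 ≤ d) (hm : 2 ≤ m)
    (p : Fin m → EuclideanSpace ℝ (Fin d)) (pstar : EuclideanSpace ℝ (Fin d))
    (hne : ∀ j, pstar ≠ p j)
    (gstar : Fin m → EuclideanSpace ℝ (Fin d))
    (hgs : ∀ j, gstar j = (‖p j - pstar‖)⁻¹ • (p j - pstar))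
    (hnp : ∀ i j : Fin m, i ≠ j → ∀ c : ℝ, gstar j ≠ c • gstar i)
    (x : EuclideanSpace ℝ (Fin d)) (hx : ∀ j, x ≠ p j)
    (heq : ∑ j, bproj ((‖p j - x‖)⁻¹ • (p j - x)) (gstar j) = 0) :
    x = pstar := by
  have hpx : ∀ j, p j - x ≠ 0 := fun j => sub_ne_zero.mpr fun h => hx j h.symm
  have hpp : ∀ j, p j - pstar ≠ 0 := fun j => sub_ne_zero.mpr fun h => hne j h.symm
  have hnx : ∀ j, ‖p j - x‖ ≠ 0 := fun j => norm_ne_zero_iff.mpr (hpx j)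
  have hnp' : ∀ j, ‖p j - pstar‖ ≠ 0 := fun j => norm_ne_zero_iff.mpr (hpp j)
  set g : Fin m → EuclideanSpace ℝ (Fin d) :=
    fun j => (‖p j - x‖)⁻¹ • (p j - x) with hgdef
  have hgne : ∀ j, g j ≠ 0 := fun j =>
    smul_ne_zero (inv_ne_zero (hnx j)) (hpx j)
  have hgsne : ∀ j, gstar j ≠ 0 := fun j => by
    rw [hgs j]; exact smul_ne_zero (inv_ne_zero (hnp' j)) (hpp j)
  have hpxg : ∀ j, p j - x = ‖p j - x‖ • g j := fun j => by
    rw [hgdef]; simp [smul_smul, mul_inv_cancel₀ (hnx j)]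
  have hppg : ∀ j, p j - pstar = ‖p j - pstar‖ • gstar j := fun j => by
    rw [hgs j]; simp [smul_smul, mul_inv_cancel₀ (hnp' j)]
  -- each projected term vanishes
  have hterm : ∀ j, (⟪bproj (g j) (gstar j), pstar - x⟫ : ℝ)
      = -(‖p j - pstar‖ * ‖bproj (g j) (gstar j)‖ ^ 2) := by
    intro j
    have h1 : pstar - x = (-(‖p j - pstar‖) • gstar j) + ‖p j - x‖ • g j := by
      rw [← hpxg j, neg_smul, ← hppg j]; abel
    rw [h1, inner_add_right, real_inner_smul_right, real_inner_smul_right,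
      bproj_inner_g _ _ (hgne j), bproj_inner_self _ _ (hgne j)]
    ring
  have hsum : ∑ j, ‖p j - pstar‖ * ‖bproj (g j) (gstar j)‖ ^ 2 = 0 := by
    have h0 : (⟪∑ j, bproj (g j) (gstar j), pstar - x⟫ : ℝ) = 0 := by
      rw [heq]; exact inner_zero_left _
    rw [sum_inner] at h0
    have h1 : ∑ j, (⟪bproj (g j) (gstar j), pstar - x⟫ : ℝ)
        = -∑ j, ‖p j - pstar‖ * ‖bproj (g j) (gstar j)‖ ^ 2 := by
      rw [← Finset.sum_neg_distrib]
      exact Finset.sum_congr rfl fun j _ => hterm j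
    rw [h1] at h0
    linarith
  have hzero : ∀ j, bproj (g j) (gstar j) = 0 := by
    intro j
    have h := (Finset.sum_eq_zero_iff_of_nonneg (fun j _ => by positivity)).mp hsum
      j (Finset.mem_univ j)
    have hn : ‖bproj (g j) (gstar j)‖ ^ 2 = 0 := by
      have := hnp' j
      rcases mul_eq_zero.mp h with h' | h'
      · exact absurd h' this
      · exact h'
    have : ‖bproj (g j) (gstar j)‖ = 0 := by
      nlinarith [norm_nonneg (bproj (g j) (gstar j))]
    exact norm_eq_zero.mp this
  -- gstar j is a multiple of p j - x, so x - pstar is a multiple of gstar j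
  have hline : ∀ j, ∃ s : ℝ, x - pstar = s • gstar j := by
    intro j
    have h := hzero j
    unfold bproj at h
    have hgj : gstar j = ((⟪g j, gstar j⟫ : ℝ) / ‖g j‖ ^ 2) • g j := by
      have := sub_eq_zero.mp h; exact this
    set a : ℝ := ((⟪g j, gstar j⟫ : ℝ) / ‖g j‖ ^ 2) * (‖p j - x‖)⁻¹ with ha
    have hgja : gstar j = a • (p j - x) := by
      rw [hgj]; simp only [hgdef]; rw [smul_smul]
    have hane : a ≠ 0 := by
      intro h0
      apply hgsne j
      rw [hgja, h0, zero_smul]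
    have hpxa : p j - x = a⁻¹ • gstar j := by
      rw [hgja, smul_smul, inv_mul_cancel₀ hane, one_smul]
    refine ⟨‖p j - pstar‖ - a⁻¹, ?_⟩
    have : x - pstar = (p j - pstar) - (p j - x) := by abel
    rw [this, sub_smul, ← hppg j, hpxa]
  -- conclude using two non-parallel bearings
  by_contra hxp
  have hd0 : x - pstar ≠ 0 := sub_ne_zero.mpr hxp
  have h01 : (⟨0, by omega⟩ : Fin m) ≠ ⟨1, by omega⟩ := by
    simp [Fin.ext_iff]
  obtain ⟨s0, hs0⟩ := hline ⟨0, by omega⟩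
  obtain ⟨s1, hs1⟩ := hline ⟨1, by omega⟩
  have hs1ne : s1 ≠ 0 := by
    intro h0; rw [h0, zero_smul] at hs1; exact hd0 hs1
  apply hnp ⟨0, by omega⟩ ⟨1, by omega⟩ h01 (s1⁻¹ * s0)
  rw [mul_smul, ← hs0, hs1, smul_smul, inv_mul_cancel₀ hs1ne, one_smul]
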